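/- ℕ[x] is not length-factorial: the polynomial x^5 + x^4 + x^3 + x^2 + x + 1 has two distinct factorizations into irreducibles of the same length, namely (x + 1)(x^4 + x^2 + 1) and (x^3 + 1)(x^2 + x + 1), where all four factors are irreducible in ℕ[x] and the two factorizations are distinct. -/
import Mathlib

open Polynomial

private lemma cmul (g h : Polynomial ℕ) (n : ℕ) :
    (g * h).coeff n = ∑ i ∈ Finset.range (n + 1), g.coeff i * h.coeff (n - i) := by
  rw [coeff_mul, Finset.Nat.sum_antidiagonal_eq_sum_range_succ_mk]

private lemma unit_of_deg0 (g : Polynomial ℕ) (h0 : g.natDegree = 0) (hc : g.coeff 0 = 1) :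
    IsUnit g := by
  rw [Polynomial.eq_C_of_natDegree_eq_zero h0, hc]
  simp

/-- `f` is irreducible (an atom) in the multiplicative monoid `ℕ[x]*`. -/
def MonoidIrreducible (f : Polynomial ℕ) : Prop :=
  f ≠ 0 ∧ ¬ IsUnit f ∧ ∀ g h : Polynomial ℕ, f = g * h → IsUnit g ∨ IsUnit h

private lemma setup {f g h : Polynomial ℕ} (heq : f = g * h) (hc0 : f.coeff 0 = 1)
    (d : ℕ) (hd : f.natDegree = d) (hl : f.coeff d = 1) :
    g ≠ 0 ∧ h ≠ 0 ∧ g.natDegree + h.natDegree = d ∧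
    g.coeff g.natDegree = 1 ∧ h.coeff h.natDegree = 1 ∧
    g.coeff 0 = 1 ∧ h.coeff 0 = 1 := by
  have hf0 : f ≠ 0 := fun hf => by simp [hf] at hc0
  have hg0 : g ≠ 0 := fun hg => hf0 (by rw [heq, hg, zero_mul])
  have hh0 : h ≠ 0 := fun hh => hf0 (by rw [heq, hh, mul_zero])
  have hdeg : g.natDegree + h.natDegree = d := by
    rw [← Polynomial.natDegree_mul hg0 hh0, ← heq, hd]
  have hlead : g.leadingCoeff * h.leadingCoeff = 1 := by
    rw [← Polynomial.leadingCoeff_mul, ← heq]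
    rwa [Polynomial.leadingCoeff, hd]
  have hconst : g.coeff 0 * h.coeff 0 = 1 := by
    rw [← Polynomial.mul_coeff_zero, ← heq, hc0]
  exact ⟨hg0, hh0, hdeg, Nat.eq_one_of_mul_eq_one_right hlead,
    Nat.eq_one_of_mul_eq_one_left hlead,
    Nat.eq_one_of_mul_eq_one_right hconst, Nat.eq_one_of_mul_eq_one_left hconst⟩

private lemma irr1 : MonoidIrreducible (X + 1 : Polynomial ℕ) := by
  refine ⟨fun hf => by simpa [coeff_one] using congrArg (fun p => p.coeff 0) hf, ?_, ?_⟩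
  · intro hu
    have h0 := Polynomial.natDegree_eq_zero_of_isUnit hu
    have h1 : ((X:Polynomial ℕ) + 1).natDegree = 1 := by compute_degree!
    omega
  · intro g h heq
    obtain ⟨hg0, hh0, hdeg, hgl, hhl, hgc, hhc⟩ :=
      setup heq (by simp [coeff_one]) 1 (by compute_degree!) (by simp [coeff_one, coeff_X])
    rcases Nat.eq_zero_or_pos g.natDegree with hg | hg
    · exact Or.inl (unit_of_deg0 g hg hgc)
    · have hh : h.natDegree = 0 := by omega
      exact Or.inr (unit_of_deg0 h hh hhc)

private lemma irr2 : MonoidIrreducible (X ^ 2 + X + 1 : Polynomial ℕ) := by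
  refine ⟨fun hf => by simpa [coeff_one] using congrArg (fun p => p.coeff 0) hf, ?_, ?_⟩
  · intro hu
    have h0 := Polynomial.natDegree_eq_zero_of_isUnit hu
    have h2 : ((X:Polynomial ℕ)^2 + X + 1).natDegree = 2 := by compute_degree!
    omega
  · intro g h heq
    obtain ⟨hg0, hh0, hdeg, hgl, hhl, hgc, hhc⟩ :=
      setup heq (by simp [coeff_one]) 2 (by compute_degree!) (by simp [coeff_one, coeff_X])
    rcases Nat.eq_zero_or_pos g.natDegree with hg | hg
    · exact Or.inl (unit_of_deg0 g hg hgc)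
    rcases Nat.eq_zero_or_pos h.natDegree with hh | hh
    · exact Or.inr (unit_of_deg0 h hh hhc)
    exfalso
    have hg1 : g.natDegree = 1 := by omega
    have hh1 : h.natDegree = 1 := by omega
    rw [hg1] at hgl; rw [hh1] at hhl
    have hk : (g * h).coeff 1 = 1 := by rw [← heq]; simp [coeff_one, coeff_X]
    rw [cmul] at hk
    simp only [Finset.sum_range_succ, Finset.sum_range_zero, zero_add] at hk
    norm_num [hgc, hhc] at hk
    omega

private lemma irr3 : MonoidIrreducible (X ^ 3 + 1 : Polynomial ℕ) := by
  refine ⟨fun hf => by simpa [coeff_one] using congrArg (fun p => p.coeff 0) hf, ?_, ?_⟩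
  · intro hu
    have h0 := Polynomial.natDegree_eq_zero_of_isUnit hu
    have h3 : ((X:Polynomial ℕ)^3 + 1).natDegree = 3 := by compute_degree!
    omega
  · intro g h heq
    obtain ⟨hg0, hh0, hdeg, hgl, hhl, hgc, hhc⟩ :=
      setup heq (by simp [coeff_one]) 3 (by compute_degree!) (by simp [coeff_one])
    rcases Nat.eq_zero_or_pos g.natDegree with hg | hg
    · exact Or.inl (unit_of_deg0 g hg hgc)
    rcases Nat.eq_zero_or_pos h.natDegree with hh | hh
    · exact Or.inr (unit_of_deg0 h hh hhc)
    exfalso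
    have hk : (g * h).coeff 2 = 0 := by rw [← heq]; simp [coeff_one, coeff_X]
    rw [cmul] at hk
    simp only [Finset.sum_range_succ, Finset.sum_range_zero, zero_add] at hk
    norm_num [hgc, hhc] at hk
    -- hk : h.coeff 2 + g.coeff 1 * h.coeff 1 + g.coeff 2 = 0
    have hgd : g.natDegree ≤ 2 := by omega
    interval_cases hgdv : g.natDegree
    · have hh2 : h.natDegree = 2 := by omega
      rw [hh2] at hhl; omega
    · omega

private lemma irr4 : MonoidIrreducible (X ^ 4 + X ^ 2 + 1 : Polynomial ℕ) := by
  refine ⟨fun hf => by simpa [coeff_one] using congrArg (fun p => p.coeff 0) hf, ?_, ?_⟩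
  · intro hu
    have h0 := Polynomial.natDegree_eq_zero_of_isUnit hu
    have h4 : ((X:Polynomial ℕ)^4 + X^2 + 1).natDegree = 4 := by compute_degree!
    omega
  · intro g h heq
    obtain ⟨hg0, hh0, hdeg, hgl, hhl, hgc, hhc⟩ :=
      setup heq (by simp [coeff_one]) 4 (by compute_degree!) (by simp [coeff_one])
    rcases Nat.eq_zero_or_pos g.natDegree with hg | hg
    · exact Or.inl (unit_of_deg0 g hg hgc)
    rcases Nat.eq_zero_or_pos h.natDegree with hh | hh
    · exact Or.inr (unit_of_deg0 h hh hhc)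
    exfalso
    have hk : (g * h).coeff 3 = 0 := by rw [← heq]; simp [coeff_one, coeff_X]
    rw [cmul] at hk
    simp only [Finset.sum_range_succ, Finset.sum_range_zero, zero_add] at hk
    norm_num [hgc, hhc] at hk
    -- hk : h.coeff 3 + g.coeff 1 * h.coeff 2 + g.coeff 2 * h.coeff 1 + g.coeff 3 = 0
    have hk2 : (g * h).coeff 2 = 1 := by rw [← heq]; simp [coeff_one, coeff_X]
    rw [cmul] at hk2
    simp only [Finset.sum_range_succ, Finset.sum_range_zero, zero_add] at hk2
    norm_num [hgc, hhc] at hk2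
    -- hk2 : h.coeff 2 + g.coeff 1 * h.coeff 1 + g.coeff 2 = 1
    have hgd : g.natDegree ≤ 3 := by omega
    interval_cases hgdv : g.natDegree
    · have hh3 : h.natDegree = 3 := by omega
      rw [hh3] at hhl; omega
    · have hh2 : h.natDegree = 2 := by omega
      rw [hh2] at hhl; omega
    · omega

/-- `ℕ[x]` is not length-factorial: `x^5 + x^4 + x^3 + x^2 + x + 1` has two
distinct factorizations into irreducibles of the same length `2`, namely
`(x+1)(x^4+x^2+1)` and `(x^3+1)(x^2+x+1)`. -/
theorem natPolynomial_not_length_factorial :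
    (X ^ 5 + X ^ 4 + X ^ 3 + X ^ 2 + X + 1 : Polynomial ℕ)
      = (X + 1) * (X ^ 4 + X ^ 2 + 1) ∧
    (X ^ 5 + X ^ 4 + X ^ 3 + X ^ 2 + X + 1 : Polynomial ℕ)
      = (X ^ 3 + 1) * (X ^ 2 + X + 1) ∧
    MonoidIrreducible (X + 1) ∧ MonoidIrreducible (X ^ 4 + X ^ 2 + 1) ∧
    MonoidIrreducible (X ^ 3 + 1) ∧ MonoidIrreducible (X ^ 2 + X + 1) ∧
    ({X + 1, X ^ 4 + X ^ 2 + 1} : Multiset (Polynomial ℕ))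
      ≠ {X ^ 3 + 1, X ^ 2 + X + 1} := by
  refine ⟨by ring, by ring, irr1, irr4, irr3, irr2, ?_⟩
  intro hms
  have hmem : (X + 1 : Polynomial ℕ) ∈ ({X ^ 3 + 1, X ^ 2 + X + 1} : Multiset (Polynomial ℕ)) :=
    hms ▸ Multiset.mem_cons_self _ _
  rcases Multiset.mem_cons.mp hmem with hmem | hmem
  · have := congrArg (fun p => p.coeff 3) hmem
    simp [coeff_one, coeff_X] at this
  · rw [Multiset.mem_singleton] at hmem
    have := congrArg (fun p => p.coeff 2) hmem
    simp [coeff_one, coeff_X] at this
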